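/- Let E be an additive category with ℵ₁-directed colimits. Then any (unbounded) cochain complex whose terms are ℵ₁-presentable objects of E is an ℵ₁-presentable object of the category of cochain complexes in E. -/

import Mathlib

open CategoryTheory CategoryTheory.Limits

universe v u

/-- A poset is `ℵ₁`-directed if every countable subset has an upper bound. -/
def IsAleph1Directed (I : Type*) [Preorder I] : Prop :=
  ∀ S : Set I, S.Countable → ∃ j : I, ∀ i ∈ S, i ≤ j

/-- An object `X` of a category is `ℵ₁`-presentable (countably presentable) if
`Hom(X, -)` preserves colimits of diagrams indexed by `ℵ₁`-directed posets. -/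
def IsAleph1PresentableObj {C : Type u} [Category.{v} C] (X : C) : Prop :=
  ∀ (I : Type v) [Preorder I], IsAleph1Directed I →
    Nonempty (PreservesColimitsOfShape I (coyoneda.obj (Opposite.op X)))

/-- In an additive category `E` with `ℵ₁`-directed colimits, any (unbounded) cochain
complex of `ℵ₁`-presentable objects of `E` is an `ℵ₁`-presentable object of the category
of cochain complexes in `E`. -/
theorem complex_of_countably_presentable_is_countably_presentable
    (E : Type u) [Category.{v} E] [Preadditive E]
    (hE : ∀ (I : Type v) [Preorder I], IsAleph1Directed I → HasColimitsOfShape I E)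
    (K : CochainComplex E ℤ)
    (hfp : ∀ n : ℤ, IsAleph1PresentableObj (K.X n)) :
    IsAleph1PresentableObj (K : CochainComplex E ℤ) := by
  intro I _ hI
  have hne : Nonempty I := ⟨(hI ∅ Set.countable_empty).choose⟩
  have hdir : IsDirected I (· ≤ ·) := ⟨fun a b => by
    obtain ⟨j, hj⟩ := hI {a, b} ((Set.countable_singleton b).insert a)
    exact ⟨j, hj a (by simp), hj b (by simp)⟩⟩
  haveI : IsFiltered I := inferInstance
  haveI hC : HasColimitsOfShape I E := hE I hI
  haveI hpn : ∀ n : ℤ, PreservesColimitsOfShape I (coyoneda.obj (Opposite.op (K.X n))) :=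
    fun n => (hfp n I hI).some
  refine ⟨⟨fun {L} => ?_⟩⟩
  apply preservesColimit_of_preserves_colimit_cocone (colimit.isColimit L)
  have hcn : ∀ n m : ℤ, IsColimit ((coyoneda.obj (Opposite.op (K.X n))).mapCocone
      ((HomologicalComplex.eval E (ComplexShape.up ℤ) m).mapCocone (colimit.cocone L))) :=
    fun n m => isColimitOfPreserves _ (isColimitOfPreserves _ (colimit.isColimit L))
  apply Types.FilteredColimit.isColimitOf
  · -- surjectivity
    intro f
    -- step 1: degreewise factorizations
    have h1 : ∀ n : ℤ, ∃ (i : I) (x : K.X n ⟶ (L.obj i).X n),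
        x ≫ (colimit.ι L i).f n = f.f n := by
      intro n
      obtain ⟨i, x, hx⟩ := Types.jointly_surjective_of_isColimit (hcn n n) (f.f n)
      exact ⟨i, x, hx⟩
    choose i g hg using h1
    -- step 2: common stage j₀
    obtain ⟨j₀, hj₀⟩ := hI (Set.range i) (Set.countable_range i)
    have hij₀ : ∀ n, i n ≤ j₀ := fun n => hj₀ _ ⟨n, rfl⟩
    obtain ⟨g', hg'⟩ : ∃ g' : ∀ n : ℤ, K.X n ⟶ (L.obj j₀).X n,
        ∀ n, g' n ≫ (colimit.ι L j₀).f n = f.f n := by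
      refine ⟨fun n => g n ≫ (L.map (homOfLE (hij₀ n))).f n, fun n => ?_⟩
      rw [Category.assoc, ← HomologicalComplex.comp_f, colimit.w]
      exact hg n
    -- step 3: make the differentials commute at a later stage
    have h3 : ∀ n : ℤ, ∃ (k : I) (h : j₀ ≤ k),
        (g' n ≫ (L.obj j₀).d n (n + 1)) ≫ (L.map (homOfLE h)).f (n + 1) =
        (K.d n (n + 1) ≫ g' (n + 1)) ≫ (L.map (homOfLE h)).f (n + 1) := by
      intro n
      have heq : (g' n ≫ (L.obj j₀).d n (n + 1)) ≫ (colimit.ι L j₀).f (n + 1) =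
          (K.d n (n + 1) ≫ g' (n + 1)) ≫ (colimit.ι L j₀).f (n + 1) :=
        calc (g' n ≫ (L.obj j₀).d n (n + 1)) ≫ (colimit.ι L j₀).f (n + 1)
            = g' n ≫ ((L.obj j₀).d n (n + 1) ≫ (colimit.ι L j₀).f (n + 1)) := by
              rw [Category.assoc]
          _ = g' n ≫ ((colimit.ι L j₀).f n ≫ (colimit L).d n (n + 1)) := by
              rw [HomologicalComplex.Hom.comm]
          _ = (g' n ≫ (colimit.ι L j₀).f n) ≫ (colimit L).d n (n + 1) := by
              rw [Category.assoc]
          _ = f.f n ≫ (colimit L).d n (n + 1) := by rw [hg' n]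
          _ = K.d n (n + 1) ≫ f.f (n + 1) := f.comm n (n + 1)
          _ = K.d n (n + 1) ≫ (g' (n + 1) ≫ (colimit.ι L j₀).f (n + 1)) := by
              rw [hg' (n + 1)]
          _ = (K.d n (n + 1) ≫ g' (n + 1)) ≫ (colimit.ι L j₀).f (n + 1) := by
              rw [Category.assoc]
      obtain ⟨k, fa, fb, hk⟩ := (Types.FilteredColimit.isColimit_eq_iff _ (hcn n (n + 1))
        (i := j₀) (j := j₀)
        (xi := g' n ≫ (L.obj j₀).d n (n + 1))
        (xj := K.d n (n + 1) ≫ g' (n + 1))).mp heq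
      rw [Subsingleton.elim fb fa] at hk
      exact ⟨k, leOfHom fa, by
        rw [Subsingleton.elim (homOfLE (leOfHom fa)) fa]; exact hk⟩
    choose k hjk heqk using h3
    obtain ⟨j₁, hj₁⟩ := hI (Set.range k) (Set.countable_range k)
    have hkj₁ : ∀ n, k n ≤ j₁ := fun n => hj₁ _ ⟨n, rfl⟩
    have h₀₁ : j₀ ≤ j₁ := (hjk 0).trans (hkj₁ 0)
    have hsplit : ∀ m : ℤ, ∀ n : ℤ, (L.map (homOfLE h₀₁)).f m =
        (L.map (homOfLE (hjk n))).f m ≫ (L.map (homOfLE (hkj₁ n))).f m := by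
      intro m n
      rw [← HomologicalComplex.comp_f, ← L.map_comp]
      congr 1
    -- the chain map at stage j₁
    have hcomm : ∀ p q, (ComplexShape.up ℤ).Rel p q →
        (g' p ≫ (L.map (homOfLE h₀₁)).f p) ≫ (L.obj j₁).d p q =
        K.d p q ≫ (g' q ≫ (L.map (homOfLE h₀₁)).f q) := by
      intro p q hpq
      change p + 1 = q at hpq
      subst hpq
      calc (g' p ≫ (L.map (homOfLE h₀₁)).f p) ≫ (L.obj j₁).d p (p + 1)
          = g' p ≫ ((L.map (homOfLE h₀₁)).f p ≫ (L.obj j₁).d p (p + 1)) := by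
            rw [Category.assoc]
        _ = g' p ≫ ((L.obj j₀).d p (p + 1) ≫ (L.map (homOfLE h₀₁)).f (p + 1)) := by
            rw [HomologicalComplex.Hom.comm]
        _ = (g' p ≫ (L.obj j₀).d p (p + 1)) ≫ (L.map (homOfLE h₀₁)).f (p + 1) := by
            rw [Category.assoc]
        _ = (K.d p (p + 1) ≫ g' (p + 1)) ≫ (L.map (homOfLE h₀₁)).f (p + 1) := by
            rw [hsplit (p + 1) p, ← Category.assoc, ← Category.assoc, heqk p]
        _ = K.d p (p + 1) ≫ g' (p + 1) ≫ (L.map (homOfLE h₀₁)).f (p + 1) := by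
            rw [Category.assoc]
    refine ⟨j₁, ⟨fun n => g' n ≫ (L.map (homOfLE h₀₁)).f n, hcomm⟩, ?_⟩
    symm
    have : ((⟨fun n => g' n ≫ (L.map (homOfLE h₀₁)).f n, hcomm⟩ : K ⟶ L.obj j₁)
        ≫ colimit.ι L j₁ : K ⟶ colimit L) = f := by
      ext n
      dsimp
      rw [Category.assoc, ← HomologicalComplex.comp_f, colimit.w]
      exact hg' n
    simpa using this
  · -- injectivity
    intro a b ga gb h
    have hn : ∀ n : ℤ, ∃ (k : I) (ha : a ≤ k) (hb : b ≤ k),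
        ga.f n ≫ (L.map (homOfLE ha)).f n = gb.f n ≫ (L.map (homOfLE hb)).f n := by
      intro n
      have heq : ga.f n ≫ (colimit.ι L a).f n = gb.f n ≫ (colimit.ι L b).f n := by
        have h' := congrArg (fun φ : K ⟶ colimit L => φ.f n) (show ga ≫ colimit.ι L a
          = gb ≫ colimit.ι L b by simpa using h)
        simpa using h'
      obtain ⟨k, fa, fb, hk⟩ := (Types.FilteredColimit.isColimit_eq_iff _ (hcn n n)
        (i := a) (j := b) (xi := ga.f n) (xj := gb.f n)).mp heq
      exact ⟨k, leOfHom fa, leOfHom fb, by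
        rw [Subsingleton.elim (homOfLE (leOfHom fa)) fa,
          Subsingleton.elim (homOfLE (leOfHom fb)) fb]
        exact hk⟩
    choose k ha hb heqk using hn
    obtain ⟨m, hm⟩ := hI (Set.range k) (Set.countable_range k)
    have hkm : ∀ n, k n ≤ m := fun n => hm _ ⟨n, rfl⟩
    have ham : a ≤ m := (ha 0).trans (hkm 0)
    have hbm : b ≤ m := (hb 0).trans (hkm 0)
    refine ⟨m, homOfLE ham, homOfLE hbm, ?_⟩
    have goal : ga ≫ L.map (homOfLE ham) = gb ≫ L.map (homOfLE hbm) := by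
      ext n
      have h1 : (L.map (homOfLE ham)).f n =
          (L.map (homOfLE (ha n))).f n ≫ (L.map (homOfLE (hkm n))).f n := by
        rw [← HomologicalComplex.comp_f, ← L.map_comp]; congr 1
      have h2 : (L.map (homOfLE hbm)).f n =
          (L.map (homOfLE (hb n))).f n ≫ (L.map (homOfLE (hkm n))).f n := by
        rw [← HomologicalComplex.comp_f, ← L.map_comp]; congr 1
      simp only [HomologicalComplex.comp_f, h1, h2, ← Category.assoc, heqk n]
    simpa using goal
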